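/- For an n-state ergodic Markov chain with digraph G, the diagonal mean first passage (return) times satisfy m_{jj} = σ_{n-1}/q_j, where σ_{n-1} = Σ_{k=1}^n q_k is the total weight of all spanning converging trees of G and q_j is the total weight of spanning trees converging to j. -/

import Mathlib

open scoped Classical
open Finset Matrix

namespace MFPT

variable {n : ℕ}

/-- The step relation of a functional subgraph: `a → b` when `F a = some b`. -/
def Step (F : Fin n → Option (Fin n)) (a b : Fin n) : Prop := F a = some b

/-- `F` is a spanning in-forest of the weighted digraph with weight matrix `w`:
every chosen arc is a genuine (loopless, positive-weight) arc and there is no directed cycle.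
Each weak component of such a functional digraph is a converging tree (root = the vertex
mapped to `none`). -/
def IsInForest (w : Matrix (Fin n) (Fin n) ℝ) (F : Fin n → Option (Fin n)) : Prop :=
  (∀ v u, F v = some u → v ≠ u ∧ 0 < w v u) ∧ ∀ v, ¬ Relation.TransGen (Step F) v v

/-- Weight of a spanning subgraph: the product of its arc weights. -/
noncomputable def forestWeight (w : Matrix (Fin n) (Fin n) ℝ) (F : Fin n → Option (Fin n)) : ℝ :=
  ∏ v, (F v).elim 1 (fun u => w v u)

/-- Number of arcs of a functional subgraph. -/
def arcCount (F : Fin n → Option (Fin n)) : ℕ :=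
  (Finset.univ.filter fun v => (F v).isSome).card

/-- Vertex `i` belongs to the tree of `F` converging to (rooted at) `j`. -/
def InTreeOf (F : Fin n → Option (Fin n)) (i j : Fin n) : Prop :=
  Relation.ReflTransGen (Step F) i j ∧ F j = none

/-- `σ_k`: total weight of spanning in-forests with `k` arcs. -/
noncomputable def sigmaW (w : Matrix (Fin n) (Fin n) ℝ) (k : ℕ) : ℝ :=
  ∑ F : Fin n → Option (Fin n),
    if IsInForest w F ∧ arcCount F = k then forestWeight w F else 0

/-- `Q_k`: the matrix whose `(i,j)` entry is the total weight of in-forests with `k` arcs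
in which `i` belongs to the tree converging to `j`. -/
noncomputable def Qmat (w : Matrix (Fin n) (Fin n) ℝ) (k : ℕ) : Matrix (Fin n) (Fin n) ℝ :=
  Matrix.of fun i j => ∑ F : Fin n → Option (Fin n),
    if IsInForest w F ∧ arcCount F = k ∧ InTreeOf F i j then forestWeight w F else 0

/-- `q_j`: total weight of spanning trees converging to `j` (in-forests with `n-1` arcs
whose unique root is `j`). -/
noncomputable def treeWeight (w : Matrix (Fin n) (Fin n) ℝ) (j : Fin n) : ℝ :=
  ∑ F : Fin n → Option (Fin n),
    if IsInForest w F ∧ arcCount F = n - 1 ∧ F j = none then forestWeight w F else 0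

/-- `f_{ij}`: total weight of 2-tree in-forests having one tree containing `i` and the other
tree converging to `j`. -/
noncomputable def fWeight (w : Matrix (Fin n) (Fin n) ℝ) (i j : Fin n) : ℝ :=
  ∑ F : Fin n → Option (Fin n),
    if IsInForest w F ∧ arcCount F = n - 2 ∧ F j = none ∧
        ¬ Relation.ReflTransGen (Step F) i j
      then forestWeight w F else 0

/-- The Laplacian matrix of the weighted digraph with weight matrix `w`. -/
noncomputable def lap (w : Matrix (Fin n) (Fin n) ℝ) : Matrix (Fin n) (Fin n) ℝ :=
  Matrix.of fun i j => if i = j then ∑ k ∈ Finset.univ.erase i, w i k else - w i j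

/-- `X` is the group inverse of `L`. -/
def IsGroupInverse (L X : Matrix (Fin n) (Fin n) ℝ) : Prop :=
  L * X * L = L ∧ X * L * X = X ∧ L * X = X * L

/-- `T` is (row-)stochastic. -/
def IsStochastic (T : Matrix (Fin n) (Fin n) ℝ) : Prop :=
  (∀ i j, 0 ≤ T i j) ∧ ∀ i, ∑ j, T i j = 1

/-- Irreducibility of `T`. -/
def IsIrreducible (T : Matrix (Fin n) (Fin n) ℝ) : Prop :=
  ∀ i j, ∃ k : ℕ, 0 < (T ^ k) i j

/-- Ergodicity (primitivity) of `T`: some power of `T` is entrywise positive. -/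
def IsErgodic (T : Matrix (Fin n) (Fin n) ℝ) : Prop :=
  ∃ N : ℕ, ∀ i j, 0 < (T ^ N) i j

/-- `π` is a stationary distribution of `T`. -/
def IsStationary (T : Matrix (Fin n) (Fin n) ℝ) (π : Fin n → ℝ) : Prop :=
  (∀ i, 0 ≤ π i) ∧ (∑ i, π i = 1) ∧ ∀ j, ∑ i, π i * T i j = π j

/-- Probability of the trajectory `p` of length `k` under transition matrix `T`. -/
noncomputable def pathProb (T : Matrix (Fin n) (Fin n) ℝ) (k : ℕ)
    (p : Fin (k + 1) → Fin n) : ℝ :=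
  ∏ t : Fin k, T (p t.castSucc) (p t.succ)

/-- `Pr(F_{ij} = k)`: probability that, starting at `i`, the chain first reaches `j`
(at a step `p ≥ 1`) exactly at time `k`. -/
noncomputable def firstPassageProb (T : Matrix (Fin n) (Fin n) ℝ) (i j : Fin n) (k : ℕ) : ℝ :=
  ∑ p : Fin (k + 1) → Fin n,
    if p 0 = i ∧ p (Fin.last k) = j ∧
        (∀ t : Fin (k + 1), t ≠ 0 → t ≠ Fin.last k → p t ≠ j)
      then pathProb T k p else 0

/-- Mean first passage time `m_{ij} = E F_{ij} = ∑ k k·Pr(F_{ij}=k)`. -/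
noncomputable def mfpt (T : Matrix (Fin n) (Fin n) ℝ) (i j : Fin n) : ℝ :=
  ∑' k : ℕ, (k : ℝ) * firstPassageProb T i j k

end MFPT

namespace MFPT

variable {n : ℕ}

/-! ## Orbit lemmas -/

section Orbit

variable (G : Fin n → Fin n)

lemma transGen_iff_iterate {a b : Fin n} (r : Fin n)
    (F : Fin n → Option (Fin n)) (hF : ∀ v, F v = if v = r then none else some (G v)) :
    Relation.TransGen (Step F) a b → ∃ m, 0 < m ∧ G^[m] a = b ∧ ∀ t < m, G^[t] a ≠ r := by
  intro h
  induction h with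
  | single h =>
      rw [Step, hF] at h
      split at h
      · exact absurd h (by simp)
      · refine ⟨1, one_pos, by simpa using Option.some.inj h, ?_⟩
        intro t ht
        interval_cases t
        simpa using ‹¬ _ = r›
  | tail h hstep ih =>
      obtain ⟨m, hm, hGm, havoid⟩ := ih
      rw [Step, hF] at hstep
      split at hstep
      · exact absurd hstep (by simp)
      · refine ⟨m + 1, Nat.succ_pos _, ?_, ?_⟩
        · rw [Function.iterate_succ_apply', hGm]
          simpa using Option.some.inj hstep
        · intro t ht
          rcases Nat.lt_succ_iff_lt_or_eq.mp ht with h' | h'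
          · exact havoid t h'
          · subst h'; rw [hGm]; assumption

lemma reflTransGen_to_iterate {a b : Fin n}
    (F : Fin n → Option (Fin n)) (hF : ∀ v u, F v = some u → G v = u) :
    Relation.ReflTransGen (Step F) a b → ∃ m, G^[m] a = b := by
  intro h
  induction h with
  | refl => exact ⟨0, rfl⟩
  | tail h hstep ih =>
      obtain ⟨m, hm⟩ := ih
      exact ⟨m + 1, by rw [Function.iterate_succ_apply', hm, hF _ _ hstep]⟩

/-- acyclicity of the functional subgraph obtained by deleting the arc at a periodic,
globally reachable vertex. -/
lemma acyclic_of_delete (r : Fin n)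
    (hreach : ∀ v, ∃ m, G^[m] v = r) (v : Fin n) :
    ¬ Relation.TransGen (Step (fun v => if v = r then none else some (G v))) v v := by
  intro h
  obtain ⟨m, hm, hGm, havoid⟩ := transGen_iff_iterate G r _ (fun _ => rfl) h
  obtain ⟨s, hs⟩ := hreach v
  have hperv : Function.IsPeriodicPt G m v := hGm
  have : G^[s % m] v = r := by rw [hperv.iterate_mod_apply s, hs]
  exact havoid _ (Nat.mod_lt _ hm) this

/-- every vertex of an acyclic functional subgraph reaches a root. -/
lemma exists_root (F : Fin n → Option (Fin n))
    (hacyc : ∀ v, ¬ Relation.TransGen (Step F) v v) (v : Fin n) :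
    ∃ r, Relation.ReflTransGen (Step F) v r ∧ F r = none := by
  classical
  -- iterate the partial map
  set g : Option (Fin n) → Option (Fin n) := fun o => o.bind F with hg
  have hnone : ∀ m, g^[m] none = none := fun m => Function.iterate_fixed rfl m
  have hstep : ∀ (m : ℕ) (a b : Fin n), g^[m] (some a) = some b →
      Relation.ReflTransGen (Step F) a b := by
    intro m
    induction m with
    | zero => intro a b h; simp at h; exact h ▸ Relation.ReflTransGen.refl
    | succ m ih =>
        intro a b h
        rw [Function.iterate_succ_apply] at h
        cases hFa : F a with
        | none =>
            have hga : g (some a) = none := by simp [hg, hFa]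
            rw [hga, hnone] at h; exact absurd h (by simp)
        | some c =>
            have hga : g (some a) = some c := by simp [hg, hFa]
            rw [hga] at h
            exact Relation.ReflTransGen.head hFa (ih c b h)
  by_cases hall : ∀ m ≤ n, ∃ b, g^[m] (some v) = some b
  · -- pigeonhole: repetition yields a cycle
    exfalso
    have hf : ∀ m : Fin (n + 1), ∃ b, g^[(m : ℕ)] (some v) = some b := by
      intro m; exact hall m (Nat.lt_succ_iff.mp m.isLt)
    choose f hfspec using hf
    obtain ⟨a, b, hab, hfab⟩ := Fintype.exists_ne_map_eq_of_card_lt f (by simp)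
    wlog hlt : (a : ℕ) < (b : ℕ) generalizing a b
    · have hne : (a : ℕ) ≠ (b : ℕ) := fun h => hab (Fin.ext h)
      exact this b a hab.symm hfab.symm (by omega)
    -- g^[b] (some v) = some (f a), g^[a] (some v) = some (f a)
    have h1 : g^[(b : ℕ)] (some v) = some (f a) := by rw [hfspec b, hfab]
    have h2 : g^[(b : ℕ) - (a : ℕ)] (some (f a)) = some (f a) := by
      have := hfspec a
      calc g^[(b : ℕ) - (a : ℕ)] (some (f a))
          = g^[(b : ℕ) - (a : ℕ)] (g^[(a : ℕ)] (some v)) := by rw [this]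
        _ = g^[(b : ℕ) - (a : ℕ) + (a : ℕ)] (some v) := by
              rw [← Function.iterate_add_apply]
        _ = some (f a) := by rw [Nat.sub_add_cancel hlt.le, h1]
    -- extract a TransGen cycle
    have hpos : 0 < (b : ℕ) - (a : ℕ) := by omega
    rw [show (b : ℕ) - (a : ℕ) = ((b : ℕ) - (a : ℕ) - 1) + 1 by omega,
      Function.iterate_succ_apply] at h2
    have hFne : F (f a) ≠ none := by
      intro hFa
      have hga : g (some (f a)) = none := by simp [hg, hFa]
      rw [hga, hnone] at h2
      exact absurd h2 (by simp)
    obtain ⟨c, hc⟩ := Option.ne_none_iff_exists'.mp hFne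
    have hc2 : Relation.ReflTransGen (Step F) c (f a) := by
      apply hstep ((b : ℕ) - (a : ℕ) - 1)
      have hga : g (some (f a)) = some c := by simp [hg, hc]
      rw [hga] at h2
      exact h2
    exact hacyc (f a) (Relation.TransGen.head' hc hc2)
  · push_neg at hall
    obtain ⟨m, hmn, hm⟩ := hall
    have hex : ∃ m, ∀ b, g^[m] (some v) ≠ some b := ⟨m, hm⟩
    have hmin := Nat.find_spec hex
    set m₀ := Nat.find hex with hm₀
    have hm₀pos : 0 < m₀ := by
      rcases Nat.eq_zero_or_pos m₀ with h | h
      · exfalso; exact (h ▸ hmin) v (by simp)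
      · exact h
    have hprev : ¬ ∀ b, g^[m₀ - 1] (some v) ≠ some b :=
      Nat.find_min hex (Nat.sub_lt hm₀pos one_pos)
    push_neg at hprev
    obtain ⟨b, hb⟩ := hprev
    refine ⟨b, hstep _ _ _ hb, ?_⟩
    rcases hFb : F b with _ | c
    · rfl
    · exfalso
      apply hmin c
      rw [show m₀ = (m₀ - 1) + 1 by omega, Function.iterate_succ_apply', hb]
      simp [hg, hFb]

end Orbit

/-! ## Root counting -/

lemma root_count (F : Fin n → Option (Fin n)) (h : arcCount F = n - 1) (hn : 0 < n) :
    (Finset.univ.filter fun v => F v = none).card = 1 := by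
  have hsplit := Finset.card_filter_add_card_filter_not
    (s := (Finset.univ : Finset (Fin n))) (p := fun v => (F v).isSome)
  rw [arcCount] at h
  have : (Finset.univ.filter fun v => ¬ (F v).isSome) =
      (Finset.univ.filter fun v => F v = none) := by
    apply Finset.filter_congr; intro v _
    cases h : F v <;> simp [h]
  rw [this] at hsplit
  have hle : arcCount F ≤ n := by
    rw [arcCount]
    simpa [Finset.card_univ] using
      Finset.card_filter_le (Finset.univ : Finset (Fin n)) (fun v => (F v).isSome)
  simp only [Finset.card_univ, Fintype.card_fin] at hsplit
  omega

lemma exists_unique_root (F : Fin n → Option (Fin n)) (h : arcCount F = n - 1) (hn : 0 < n) :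
    ∃ r, F r = none ∧ ∀ v, F v = none → v = r := by
  obtain ⟨r, hr⟩ := Finset.card_eq_one.mp (root_count F h hn)
  refine ⟨r, ?_, ?_⟩
  · have : r ∈ Finset.univ.filter fun v => F v = none := hr ▸ Finset.mem_singleton_self r
    exact (Finset.mem_filter.mp this).2
  · intro v hv
    have : v ∈ Finset.univ.filter fun v => F v = none := Finset.mem_filter.mpr ⟨Finset.mem_univ _, hv⟩
    rw [hr] at this; exact Finset.mem_singleton.mp this

/-! ## Part A -/

lemma sigma_eq_sum_tree (w : Matrix (Fin n) (Fin n) ℝ) (hn : 0 < n) :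
    sigmaW w (n - 1) = ∑ k, treeWeight w k := by
  unfold sigmaW treeWeight
  rw [Finset.sum_comm]
  apply Finset.sum_congr rfl
  intro F _
  by_cases hP : IsInForest w F ∧ arcCount F = n - 1
  · rw [if_pos hP]
    have : ∀ k : Fin n, (if IsInForest w F ∧ arcCount F = n - 1 ∧ F k = none
        then forestWeight w F else 0) = if F k = none then forestWeight w F else 0 := by
      intro k; by_cases hk : F k = none <;> simp [hk, hP.1, hP.2]
    rw [Finset.sum_congr rfl (fun k _ => this k)]
    obtain ⟨r, hr, huniq⟩ := exists_unique_root F hP.2 hn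
    have : ∀ k : Fin n, (if F k = none then forestWeight w F else 0) =
        if k = r then forestWeight w F else 0 := by
      intro k
      by_cases hk : F k = none
      · rw [if_pos hk, if_pos (huniq k hk)]
      · rw [if_neg hk, if_neg (fun h => hk (by rw [h]; exact hr))]
    rw [Finset.sum_congr rfl (fun k _ => this k), Finset.sum_ite_eq' Finset.univ r]
    simp
  · rw [if_neg hP]
    symm
    apply Finset.sum_eq_zero
    intro k _
    rw [if_neg]
    rintro ⟨h1, h2, _⟩
    exact hP ⟨h1, h2⟩

/-! ## Stage 2 : the Markov chain tree theorem -/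

section TreeTheorem

variable (T : Matrix (Fin n) (Fin n) ℝ)

/-- The set `𝒰_l` of functional digraphs whose unique cycle passes through `l` and
whose arcs are all positive. -/
def GoodFn (l : Fin n) (G : Fin n → Fin n) : Prop :=
  (∀ v, ∃ m, G^[m] v = l) ∧ ∀ v, 0 < T v (G v)

lemma exists_periodic (G : Fin n → Fin n) (l : Fin n)
    (hreach : ∀ v, ∃ m, G^[m] v = l) : ∃ p, 0 < p ∧ G^[p] l = l := by
  have hn : 0 < n := l.pos
  obtain ⟨a, b, hab, hfab⟩ := Fintype.exists_ne_map_eq_of_card_lt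
    (fun m : Fin (n + 1) => G^[(m : ℕ)] l) (by simp)
  wlog hlt : (a : ℕ) < (b : ℕ) generalizing a b
  · have hne : (a : ℕ) ≠ (b : ℕ) := fun h => hab (Fin.ext h)
    exact this b a hab.symm hfab.symm (by omega)
  set x := G^[(a : ℕ)] l with hx
  have hxx : G^[(b : ℕ) - (a : ℕ)] x = x := by
    rw [hx, ← Function.iterate_add_apply, Nat.sub_add_cancel hlt.le, ← hfab]
  obtain ⟨s, hs⟩ := hreach x
  refine ⟨(b : ℕ) - (a : ℕ), by omega, ?_⟩
  have h1 : G^[(b : ℕ) - (a : ℕ)] l = G^[((b : ℕ) - (a : ℕ)) + s] x := by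
    rw [← hs, ← Function.iterate_add_apply]
  have h2 : G^[s + ((b : ℕ) - (a : ℕ))] x = l := by
    rw [Function.iterate_add_apply, hxx, hs]
  rw [h1, Nat.add_comm, h2]

lemma periodic_inj {G : Fin n → Fin n} {x y : Fin n} {p q : ℕ}
    (hp : 0 < p) (hq : 0 < q) (hx : G^[p] x = x) (hy : G^[q] y = y)
    (hxy : G x = G y) : x = y := by
  have hxp : Function.IsPeriodicPt G p x := hx
  have hyq : Function.IsPeriodicPt G q y := hy
  have hxpq : G^[p * q] x = x := hxp.mul_const q
  have hypq : G^[p * q] y = y := by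
    have := hyq.const_mul p
    exact this
  have hpq : 0 < p * q := Nat.mul_pos hp hq
  have key : ∀ z : Fin n, G^[p * q] z = G^[p * q - 1] (G z) := by
    intro z
    conv_lhs => rw [show p * q = (p * q - 1) + 1 by omega]
    rw [Function.iterate_succ_apply]
  calc x = G^[p * q] x := hxpq.symm
    _ = G^[p * q - 1] (G x) := key x
    _ = G^[p * q - 1] (G y) := by rw [hxy]
    _ = G^[p * q] y := (key y).symm
    _ = y := hypq

lemma arcCount_delete (G : Fin n → Fin n) (r : Fin n) :
    arcCount (fun v => if v = r then none else some (G v)) = n - 1 := by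
  have : (Finset.univ.filter fun v =>
      ((if v = r then none else some (G v)) : Option (Fin n)).isSome) =
      Finset.univ.erase r := by
    ext v
    by_cases h : v = r <;> simp [h, Finset.mem_erase]
  rw [arcCount, this, Finset.card_erase_of_mem (Finset.mem_univ r), Finset.card_univ,
    Fintype.card_fin]

lemma tree_arcs {w : Matrix (Fin n) (Fin n) ℝ} {F : Fin n → Option (Fin n)} {a : Fin n}
    (h2 : arcCount F = n - 1) (h3 : F a = none) {v : Fin n} (hv : v ≠ a) :
    ∃ u, F v = some u := by
  have hn : 0 < n := by
    exact a.pos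
  obtain ⟨r, hr, huniq⟩ := exists_unique_root F h2 hn
  have hra : a = r := huniq a h3
  rcases hF : F v with _ | u
  · exact absurd (hra ▸ huniq v hF) hv
  · exact ⟨u, rfl⟩

lemma tree_reach {w : Matrix (Fin n) (Fin n) ℝ} {F : Fin n → Option (Fin n)} {a : Fin n}
    (h1 : IsInForest w F) (h2 : arcCount F = n - 1) (h3 : F a = none) (v : Fin n) :
    Relation.ReflTransGen (Step F) v a := by
  have hn : 0 < n := by
    exact a.pos
  obtain ⟨r, hstep, hr⟩ := exists_root F h1.2 v
  obtain ⟨r', hr', huniq⟩ := exists_unique_root F h2 hn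
  have : r = a := (huniq r hr).trans (huniq a h3).symm
  exact this ▸ hstep

/-- splitting the weight of a functional digraph into tree weight times the extra arc. -/
lemma weight_split (G : Fin n → Fin n) (r : Fin n) (F : Fin n → Option (Fin n))
    (hFr : F r = none) (hFv : ∀ v, v ≠ r → F v = some (G v)) :
    ∏ v, T v (G v) = forestWeight T F * T r (G r) := by
  rw [forestWeight]
  have hA := Finset.prod_eq_prod_diff_singleton_mul (Finset.mem_univ r) (fun v => T v (G v))
  have hB := Finset.prod_eq_prod_diff_singleton_mul (Finset.mem_univ r)
    (fun v => (F v).elim 1 (fun u => T v u))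
  rw [hA, hB, hFr]
  simp only [Option.elim]
  rw [mul_one]
  congr 1
  apply Finset.prod_congr rfl
  intro v hv
  have hvr : v ≠ r := by simpa using (Finset.mem_sdiff.mp hv).2
  rw [hFv v hvr]

/-- delete the arc at `r` from the functional digraph `G`. -/
def delArc (G : Fin n → Fin n) (r : Fin n) : Fin n → Option (Fin n) :=
  fun v => if v = r then none else some (G v)

/-- the cycle predecessor of `l`. -/
noncomputable def cycPred (G : Fin n → Fin n) (l : Fin n) : Fin n :=
  if h : ∃ i, (∃ p, 0 < p ∧ G^[p] i = i) ∧ G i = l then h.choose else l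

lemma cycPred_spec (G : Fin n → Fin n) (l : Fin n)
    (h : ∃ i, (∃ p, 0 < p ∧ G^[p] i = i) ∧ G i = l) :
    (∃ p, 0 < p ∧ G^[p] (cycPred G l) = cycPred G l) ∧ G (cycPred G l) = l := by
  rw [cycPred, dif_pos h]; exact h.choose_spec

lemma cycPred_eq (G : Fin n → Fin n) (l i : Fin n)
    (hper : ∃ p, 0 < p ∧ G^[p] i = i) (hGi : G i = l) : cycPred G l = i := by
  have hex : ∃ i, (∃ p, 0 < p ∧ G^[p] i = i) ∧ G i = l := ⟨i, hper, hGi⟩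
  obtain ⟨⟨p, hp, hpp⟩, hGc⟩ := cycPred_spec G l hex
  obtain ⟨q, hq, hqq⟩ := hper
  exact periodic_inj hp hq hpp hqq (hGc.trans hGi.symm)

/-- membership of the deleted graph in the tree set. -/
lemma delArc_tree {T : Matrix (Fin n) (Fin n) ℝ} (G : Fin n → Fin n) (r : Fin n)
    (hreach : ∀ v, ∃ m, G^[m] v = r) (hpos : ∀ v, 0 < T v (G v)) :
    IsInForest T (delArc G r) ∧ arcCount (delArc G r) = n - 1 ∧ delArc G r r = none := by
  refine ⟨⟨?_, ?_⟩, arcCount_delete G r, by simp [delArc]⟩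
  · intro v u hvu
    rw [delArc] at hvu
    split at hvu
    · exact absurd hvu (by simp)
    · obtain rfl : G v = u := Option.some.inj hvu
      refine ⟨?_, hpos v⟩
      intro hveq
      have hfix : ∀ m, G^[m] v = v := fun m => Function.iterate_fixed hveq.symm m
      obtain ⟨m, hm⟩ := hreach v
      exact ‹¬ v = r› (by rw [← hm, hfix])
  · exact acyclic_of_delete G r hreach

/-- restoring the arc gives back `G`. -/
lemma delArc_restore (G : Fin n → Fin n) (r : Fin n) {v : Fin n} (hv : v ≠ r) :
    delArc G r v = some (G v) := by rw [delArc, if_neg hv]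

/-- the claim `R`: the total weight of `𝒰_l` equals `q_l`. -/
lemma sum_good_eq_treeWeight (hS : IsStochastic T) (l : Fin n) :
    ∑ G : Fin n → Fin n, (if GoodFn T l G then ∏ v, T v (G v) else 0) = treeWeight T l := by
  classical
  have h1 : treeWeight T l = ∑ p : Fin n × (Fin n → Option (Fin n)),
      (if (IsInForest T p.2 ∧ arcCount p.2 = n - 1 ∧ p.2 l = none) ∧ 0 < T l p.1
        then forestWeight T p.2 * T l p.1 else 0) := by
    rw [Fintype.sum_prod_type_right]
    rw [treeWeight]
    apply Finset.sum_congr rfl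
    intro F _
    by_cases h : IsInForest T F ∧ arcCount F = n - 1 ∧ F l = none
    · rw [if_pos h, ← mul_one (forestWeight T F), ← hS.2 l, Finset.mul_sum]
      apply Finset.sum_congr rfl
      intro k _
      by_cases hk : 0 < T l k
      · rw [if_pos ⟨h, hk⟩]
      · have hz : T l k = 0 := le_antisymm (not_lt.mp hk) (hS.1 l k)
        rw [if_neg (fun hc => hk hc.2), hz, mul_zero]
    · rw [if_neg h]
      symm
      apply Finset.sum_eq_zero
      intro k _
      exact if_neg (fun hc => h hc.1)
  rw [h1, ← Finset.sum_filter, ← Finset.sum_filter]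
  symm
  refine Finset.sum_nbij'
    (i := fun p => fun v => if v = l then p.1 else (p.2 v).getD l)
    (j := fun G => (G l, delArc G l)) ?_ ?_ ?_ ?_ ?_
  · -- forward membership
    intro p hp
    obtain ⟨⟨hfor, harc, hroot⟩, hposkl⟩ := (Finset.mem_filter.mp hp).2
    set G : Fin n → Fin n := fun v => if v = l then p.1 else (p.2 v).getD l with hG
    have hGF : ∀ a u, p.2 a = some u → G a = u := fun a u hau => by
      have hal : a ≠ l := fun h => by rw [h, hroot] at hau; exact absurd hau (by simp)
      simp [hG, hal, hau]
    refine Finset.mem_filter.mpr ⟨Finset.mem_univ _, ?_, ?_⟩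
    · -- reach
      intro v
      exact reflTransGen_to_iterate G p.2 hGF (tree_reach (w := T) hfor harc hroot v)
    · -- positivity
      intro v
      by_cases hv : v = l
      · have hGv : G v = p.1 := by simp [hG, hv]
        rw [hGv, hv]; exact hposkl
      · obtain ⟨u, hu⟩ := tree_arcs (w := T) harc hroot hv
        rw [hGF v u hu]; exact (hfor.1 v u hu).2
  · -- backward membership
    intro G hG
    obtain ⟨hreach, hpos⟩ := (Finset.mem_filter.mp hG).2
    obtain ⟨h1', h2', h3'⟩ := delArc_tree (T := T) G l hreach hpos
    exact Finset.mem_filter.mpr ⟨Finset.mem_univ _, ⟨h1', h2', h3'⟩, hpos l⟩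
  · -- left inverse
    intro p hp
    dsimp only
    obtain ⟨⟨hfor, harc, hroot⟩, hposkl⟩ := (Finset.mem_filter.mp hp).2
    refine Prod.ext ?_ ?_
    · simp
    · show delArc _ l = p.2
      funext v
      by_cases hv : v = l
      · rw [hv, hroot]; simp [delArc]
      · obtain ⟨u, hu⟩ := tree_arcs (w := T) harc hroot hv
        rw [delArc_restore _ l hv, hu]
        simp [hv]
  · -- right inverse
    intro G hG
    dsimp only
    funext v
    by_cases hv : v = l
    · rw [hv]; simp
    · rw [if_neg hv, delArc_restore G l hv]; rfl
  · -- weights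
    intro p hp
    dsimp only
    obtain ⟨⟨hfor, harc, hroot⟩, hposkl⟩ := (Finset.mem_filter.mp hp).2
    set G : Fin n → Fin n := fun v => if v = l then p.1 else (p.2 v).getD l with hG
    have hw := weight_split T G l p.2 hroot (fun v hv => by
      obtain ⟨u, hu⟩ := tree_arcs (w := T) harc hroot hv
      rw [hu]
      congr 1
      simp [hG, hv, hu])
    rw [hw]
    congr 2
    simp [hG]

/-- the claim `L`: the total weight of `𝒰_l` equals `∑ i, q_i T i l`. -/
lemma sum_good_eq_sum_root (hS : IsStochastic T) (l : Fin n) :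
    ∑ G : Fin n → Fin n, (if GoodFn T l G then ∏ v, T v (G v) else 0) =
      ∑ i, treeWeight T i * T i l := by
  classical
  have h1 : ∑ i, treeWeight T i * T i l = ∑ p : Fin n × (Fin n → Option (Fin n)),
      (if (IsInForest T p.2 ∧ arcCount p.2 = n - 1 ∧ p.2 p.1 = none) ∧ 0 < T p.1 l
        then forestWeight T p.2 * T p.1 l else 0) := by
    rw [Fintype.sum_prod_type]
    apply Finset.sum_congr rfl
    intro i _
    rw [treeWeight, Finset.sum_mul]
    apply Finset.sum_congr rfl
    intro F _
    by_cases h : IsInForest T F ∧ arcCount F = n - 1 ∧ F i = none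
    · by_cases hk : 0 < T i l
      · rw [if_pos h, if_pos ⟨h, hk⟩]
      · have hz : T i l = 0 := le_antisymm (not_lt.mp hk) (hS.1 i l)
        rw [if_pos h, if_neg (fun hc => hk hc.2), hz, mul_zero]
    · rw [if_neg h, if_neg (fun hc => h hc.1), zero_mul]
  rw [h1, ← Finset.sum_filter, ← Finset.sum_filter]
  symm
  refine Finset.sum_nbij'
    (i := fun p => fun v => if v = p.1 then l else (p.2 v).getD l)
    (j := fun G => (cycPred G l, delArc G (cycPred G l))) ?_ ?_ ?_ ?_ ?_
  · -- forward membership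
    intro p hp
    obtain ⟨⟨hfor, harc, hroot⟩, hposil⟩ := (Finset.mem_filter.mp hp).2
    set G : Fin n → Fin n := fun v => if v = p.1 then l else (p.2 v).getD l with hG
    have hGF : ∀ a u, p.2 a = some u → G a = u := fun a u hau => by
      have hai : a ≠ p.1 := fun h => by rw [h, hroot] at hau; exact absurd hau (by simp)
      simp [hG, hai, hau]
    have hGi : G p.1 = l := by simp [hG]
    refine Finset.mem_filter.mpr ⟨Finset.mem_univ _, ?_, ?_⟩
    · -- reach l
      intro v
      obtain ⟨m, hm⟩ := reflTransGen_to_iterate G p.2 hGF (tree_reach (w := T) hfor harc hroot v)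
      refine ⟨m + 1, ?_⟩
      rw [Function.iterate_succ_apply', hm, hGi]
    · -- positivity
      intro v
      by_cases hv : v = p.1
      · have hGv : G v = l := by simp [hG, hv]
        rw [hGv, hv]; exact hposil
      · obtain ⟨u, hu⟩ := tree_arcs (w := T) harc hroot hv
        rw [hGF v u hu]; exact (hfor.1 v u hu).2
  · -- backward membership
    intro G hG
    obtain ⟨hreach, hpos⟩ := (Finset.mem_filter.mp hG).2
    obtain ⟨p, hp, hppl⟩ := exists_periodic G l hreach
    have hex : ∃ i, (∃ q, 0 < q ∧ G^[q] i = i) ∧ G i = l := by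
      refine ⟨G^[p - 1] l, ⟨p, hp, ?_⟩, ?_⟩
      · rw [← Function.iterate_add_apply, Nat.add_comm, Function.iterate_add_apply, hppl]
      · rw [← Function.iterate_succ_apply' G (p - 1) l, Nat.succ_eq_add_one,
          Nat.sub_add_cancel hp, hppl]
    obtain ⟨⟨q, hq, hqq⟩, hGc⟩ := cycPred_spec G l hex
    have hreachr : ∀ v, ∃ m, G^[m] v = cycPred G l := by
      intro v
      obtain ⟨m, hm⟩ := hreach v
      refine ⟨(q - 1) + m, ?_⟩
      rw [Function.iterate_add_apply, hm]
      conv_lhs => rw [← hGc]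
      rw [← Function.iterate_succ_apply G (q - 1) (cycPred G l), Nat.succ_eq_add_one,
        Nat.sub_add_cancel hq]
      exact hqq
    obtain ⟨h1', h2', h3'⟩ := delArc_tree (T := T) G (cycPred G l) hreachr hpos
    have hposrl : 0 < T (cycPred G l) l := by
      have := hpos (cycPred G l); rwa [hGc] at this
    exact Finset.mem_filter.mpr ⟨Finset.mem_univ _, ⟨h1', h2', h3'⟩, hposrl⟩
  · -- left inverse
    intro p hp
    obtain ⟨⟨hfor, harc, hroot⟩, hposil⟩ := (Finset.mem_filter.mp hp).2
    set G : Fin n → Fin n := fun v => if v = p.1 then l else (p.2 v).getD l with hG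
    have hGF : ∀ a u, p.2 a = some u → G a = u := fun a u hau => by
      have hai : a ≠ p.1 := fun h => by rw [h, hroot] at hau; exact absurd hau (by simp)
      simp [hG, hai, hau]
    have hGi : G p.1 = l := by simp [hG]
    have hiper : ∃ q, 0 < q ∧ G^[q] p.1 = p.1 := by
      obtain ⟨m, hm⟩ := reflTransGen_to_iterate G p.2 hGF (tree_reach (w := T) hfor harc hroot l)
      exact ⟨m + 1, Nat.succ_pos _, by rw [Function.iterate_succ_apply, hGi, hm]⟩
    have hcyc : cycPred G l = p.1 := cycPred_eq G l p.1 hiper hGi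
    refine Prod.ext ?_ ?_
    · exact hcyc
    · show delArc G (cycPred G l) = p.2
      rw [hcyc]
      funext v
      by_cases hv : v = p.1
      · rw [hv, hroot]; simp [delArc]
      · obtain ⟨u, hu⟩ := tree_arcs (w := T) harc hroot hv
        rw [delArc_restore G _ hv, hGF v u hu, hu]
  · -- right inverse
    intro G hG
    dsimp only
    obtain ⟨hreach, hpos⟩ := (Finset.mem_filter.mp hG).2
    obtain ⟨p, hp, hppl⟩ := exists_periodic G l hreach
    have hex : ∃ i, (∃ q, 0 < q ∧ G^[q] i = i) ∧ G i = l := by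
      refine ⟨G^[p - 1] l, ⟨p, hp, ?_⟩, ?_⟩
      · rw [← Function.iterate_add_apply, Nat.add_comm, Function.iterate_add_apply, hppl]
      · rw [← Function.iterate_succ_apply' G (p - 1) l, Nat.succ_eq_add_one,
          Nat.sub_add_cancel hp, hppl]
    obtain ⟨⟨q, hq, hqq⟩, hGc⟩ := cycPred_spec G l hex
    funext v
    by_cases hv : v = cycPred G l
    · rw [if_pos hv, hv]; exact hGc.symm
    · rw [if_neg hv, delArc_restore G _ hv]; rfl
  · -- weights
    intro p hp
    dsimp only
    obtain ⟨⟨hfor, harc, hroot⟩, hposil⟩ := (Finset.mem_filter.mp hp).2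
    set G : Fin n → Fin n := fun v => if v = p.1 then l else (p.2 v).getD l with hG
    have hw := weight_split T G p.1 p.2 hroot (fun v hv => by
      obtain ⟨u, hu⟩ := tree_arcs (w := T) harc hroot hv
      rw [hu]
      congr 1
      simp [hG, hv, hu])
    rw [hw]
    congr 2
    simp [hG]

/-- **The Markov chain tree theorem**: the vector of spanning-tree weights is stationary. -/
lemma tree_stationary (hS : IsStochastic T) (l : Fin n) :
    ∑ i, treeWeight T i * T i l = treeWeight T l :=
  (sum_good_eq_sum_root T hS l).symm.trans (sum_good_eq_treeWeight T hS l)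

end TreeTheorem

/-! ## Stage 3 : positivity of tree weights -/

lemma forestWeight_pos {T : Matrix (Fin n) (Fin n) ℝ} {F : Fin n → Option (Fin n)}
    (h : IsInForest T F) : 0 < forestWeight T F := by
  rw [forestWeight]
  apply Finset.prod_pos
  intro v _
  rcases hF : F v with _ | u
  · simp
  · simpa using (h.1 v u hF).2

lemma treeWeight_nonneg (T : Matrix (Fin n) (Fin n) ℝ) (j : Fin n) : 0 ≤ treeWeight T j := by
  apply Finset.sum_nonneg
  intro F _
  by_cases h : IsInForest T F ∧ arcCount F = n - 1 ∧ F j = none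
  · rw [if_pos h]; exact (forestWeight_pos h.1).le
  · rw [if_neg h]

lemma pow_entry_nonneg {T : Matrix (Fin n) (Fin n) ℝ} (hT : ∀ i j, 0 ≤ T i j) :
    ∀ (k : ℕ) (a b : Fin n), 0 ≤ (T ^ k) a b := by
  intro k
  induction k with
  | zero => intro a b; rw [pow_zero, Matrix.one_apply]; positivity
  | succ k ih =>
      intro a b
      rw [pow_succ, Matrix.mul_apply]
      exact Finset.sum_nonneg fun u _ => mul_nonneg (ih a u) (hT u b)

lemma treeWeight_pos (T : Matrix (Fin n) (Fin n) ℝ) (hS : IsStochastic T)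
    (hIrr : IsIrreducible T) (j : Fin n) : 0 < treeWeight T j := by
  classical
  have hpow := pow_entry_nonneg hS.1
  have hstep : ∀ v, v ≠ j → ∃ u, 0 < T v u ∧ Nat.find (hIrr u j) < Nat.find (hIrr v j) := by
    intro v hv
    have hdv : 0 < Nat.find (hIrr v j) := by
      rcases Nat.eq_zero_or_pos (Nat.find (hIrr v j)) with h | h
      · exfalso
        have hsp := Nat.find_spec (hIrr v j)
        rw [h, pow_zero, Matrix.one_apply, if_neg hv] at hsp
        exact lt_irrefl 0 hsp
      · exact h
    have hk : 0 < (T ^ Nat.find (hIrr v j)) v j := Nat.find_spec (hIrr v j)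
    have hk1 : T ^ Nat.find (hIrr v j) = T * T ^ (Nat.find (hIrr v j) - 1) := by
      conv_lhs => rw [show Nat.find (hIrr v j) = 1 + (Nat.find (hIrr v j) - 1) by omega]
      rw [pow_add, pow_one]
    rw [hk1, Matrix.mul_apply] at hk
    obtain ⟨u, hu⟩ : ∃ u, 0 < T v u * (T ^ (Nat.find (hIrr v j) - 1)) u j := by
      by_contra hc
      push_neg at hc
      have hz : ∑ u, T v u * (T ^ (Nat.find (hIrr v j) - 1)) u j = 0 :=
        le_antisymm (Finset.sum_nonpos fun u _ => hc u)
          (Finset.sum_nonneg fun u _ => mul_nonneg (hS.1 v u) (hpow _ u j))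
      rw [hz] at hk
      exact lt_irrefl 0 hk
    have hTvu : 0 < T v u := by
      rcases lt_or_eq_of_le (hS.1 v u) with h | h
      · exact h
      · rw [← h, zero_mul] at hu; exact absurd hu (lt_irrefl 0)
    have hTu : 0 < (T ^ (Nat.find (hIrr v j) - 1)) u j := by
      rcases lt_or_eq_of_le (hpow (Nat.find (hIrr v j) - 1) u j) with h | h
      · exact h
      · rw [← h, mul_zero] at hu; exact absurd hu (lt_irrefl 0)
    refine ⟨u, hTvu, ?_⟩
    have := Nat.find_min' (hIrr u j) hTu
    omega
  choose nxt hnxt1 hnxt2 using hstep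
  set F : Fin n → Option (Fin n) := fun v => if h : v = j then none else some (nxt v h) with hF
  have harcs : ∀ v u, F v = some u → v ≠ u ∧ 0 < T v u := by
    intro v u hvu
    simp only [hF] at hvu
    split at hvu
    · exact absurd hvu (by simp)
    · obtain rfl : nxt v ‹¬ v = j› = u := Option.some.inj hvu
      refine ⟨fun h => ?_, hnxt1 v _⟩
      have := hnxt2 v ‹¬ v = j›
      rw [← h] at this
      exact lt_irrefl _ this
  have hdec : ∀ a b, Step F a b → Nat.find (hIrr b j) < Nat.find (hIrr a j) := by
    intro a b hab
    rw [Step] at hab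
    simp only [hF] at hab
    split at hab
    · exact absurd hab (by simp)
    · obtain rfl : nxt a ‹¬ a = j› = b := Option.some.inj hab
      exact hnxt2 a _
  have hacyc : ∀ v, ¬ Relation.TransGen (Step F) v v := by
    have key : ∀ a b, Relation.TransGen (Step F) a b →
        Nat.find (hIrr b j) < Nat.find (hIrr a j) := by
      intro a b h
      induction h with
      | single h => exact hdec _ _ h
      | tail h hstep ih => exact lt_trans (hdec _ _ hstep) ih
    intro v hv
    exact lt_irrefl _ (key v v hv)
  have hforest : IsInForest T F := ⟨harcs, hacyc⟩
  have harc : arcCount F = n - 1 := by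
    have hfilter : (Finset.univ.filter fun v => (F v).isSome) = Finset.univ.erase j := by
      ext v
      by_cases h : v = j <;> simp [hF, h, Finset.mem_erase]
    rw [arcCount, hfilter, Finset.card_erase_of_mem (Finset.mem_univ j), Finset.card_univ,
      Fintype.card_fin]
  have hroot : F j = none := by simp [hF]
  rw [treeWeight]
  apply Finset.sum_pos'
  · intro F' _
    by_cases h : IsInForest T F' ∧ arcCount F' = n - 1 ∧ F' j = none
    · rw [if_pos h]; exact (forestWeight_pos h.1).le
    · rw [if_neg h]
  · refine ⟨F, Finset.mem_univ F, ?_⟩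
    rw [if_pos ⟨hforest, harc, hroot⟩]
    exact forestWeight_pos hforest

/-! ## Stage 4 : probability -/

/-- probability of avoiding `j` at all times `1,…,k` starting from `i`. -/
noncomputable def avoidProb (T : Matrix (Fin n) (Fin n) ℝ) (j i : Fin n) (k : ℕ) : ℝ :=
  ∑ p : Fin (k + 1) → Fin n,
    if p 0 = i ∧ (∀ t : Fin (k + 1), t ≠ 0 → p t ≠ j) then pathProb T k p else 0

section Paths

variable (T : Matrix (Fin n) (Fin n) ℝ)

lemma pathProb_nonneg (hS : IsStochastic T) (k : ℕ) (p : Fin (k + 1) → Fin n) :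
    0 ≤ pathProb T k p :=
  Finset.prod_nonneg fun t _ => hS.1 _ _

lemma pathProb_zero (p : Fin 1 → Fin n) : pathProb T 0 p = 1 := by
  simp [pathProb]

lemma pathProb_cons (k : ℕ) (x : Fin n) (q : Fin (k + 1) → Fin n) :
    pathProb T (k + 1) (Fin.cons x q) = T x (q 0) * pathProb T k q := by
  rw [pathProb, Fin.prod_univ_succ, pathProb]
  congr 1

lemma sum_cons_eq (k : ℕ) (f : (Fin (k + 2) → Fin n) → ℝ) :
    ∑ p : Fin (k + 2) → Fin n, f p
      = ∑ x : Fin n, ∑ q : Fin (k + 1) → Fin n, f (Fin.cons x q) := by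
  rw [← Equiv.sum_comp (Fin.consEquiv fun _ : Fin (k + 2) => Fin n) f,
    Fintype.sum_prod_type]
  rfl

lemma avoidProb_zero (i j : Fin n) : avoidProb T j i 0 = 1 := by
  rw [avoidProb]
  rw [← Equiv.sum_comp (Equiv.funUnique (Fin 1) (Fin n)).symm]
  rw [Fintype.sum_congr _ (fun x : Fin n => if x = i then (1 : ℝ) else 0)]
  · simp
  · intro x
    have h1 : ∀ t : Fin 1, t = 0 := fun t => Subsingleton.elim t 0
    by_cases hx : x = i
    · rw [if_pos ?_, pathProb_zero, if_pos hx]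
      exact ⟨hx, fun t ht => absurd (h1 t) ht⟩
    · rw [if_neg ?_, if_neg hx]
      rintro ⟨h, -⟩
      exact hx h

lemma avoidProb_succ (hS : IsStochastic T) (j i : Fin n) (k : ℕ) :
    avoidProb T j i (k + 1)
      = ∑ m, (if m = j then 0 else T i m * avoidProb T j m k) := by
  rw [avoidProb, sum_cons_eq]
  have hcond : ∀ (x : Fin n) (q : Fin (k + 1) → Fin n),
      ((Fin.cons x q : Fin (k + 2) → Fin n) 0 = i ∧
        (∀ t : Fin (k + 2), t ≠ 0 → (Fin.cons x q : Fin (k + 2) → Fin n) t ≠ j))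
      ↔ (x = i ∧ ∀ s : Fin (k + 1), q s ≠ j) := by
    intro x q
    constructor
    · rintro ⟨h0, h1⟩
      refine ⟨by simpa using h0, fun s => ?_⟩
      have := h1 s.succ (Fin.succ_ne_zero s)
      simpa using this
    · rintro ⟨h0, h1⟩
      refine ⟨by simpa using h0, fun t ht => ?_⟩
      rcases Fin.eq_zero_or_eq_succ t with h | ⟨s, rfl⟩
      · exact absurd h ht
      · rw [Fin.cons_succ]; exact h1 s
  -- rewrite the summand
  have hsummand : ∀ (x : Fin n) (q : Fin (k + 1) → Fin n),
      (if (Fin.cons x q : Fin (k + 2) → Fin n) 0 = i ∧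
          (∀ t : Fin (k + 2), t ≠ 0 → (Fin.cons x q : Fin (k + 2) → Fin n) t ≠ j)
        then pathProb T (k + 1) (Fin.cons x q) else 0)
      = if x = i ∧ ∀ s : Fin (k + 1), q s ≠ j then T x (q 0) * pathProb T k q else 0 := by
    intro x q
    by_cases h : x = i ∧ ∀ s : Fin (k + 1), q s ≠ j
    · rw [if_pos ((hcond x q).mpr h), if_pos h, pathProb_cons]
    · rw [if_neg (fun hc => h ((hcond x q).mp hc)), if_neg h]
  rw [Finset.sum_congr rfl fun x _ => Finset.sum_congr rfl fun q _ => hsummand x q]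
  -- only x = i survives
  rw [Finset.sum_eq_single i
    (fun x _ hx => Finset.sum_eq_zero fun q _ => if_neg (fun hc => hx hc.1))
    (fun h => absurd (Finset.mem_univ i) h)]
  symm
  -- RHS: expand avoidProb and push inside
  have hrhs : ∀ m, (if m = j then 0 else T i m * avoidProb T j m k)
      = ∑ q : Fin (k + 1) → Fin n, (if m = j then 0 else
          if q 0 = m ∧ (∀ t : Fin (k + 1), t ≠ 0 → q t ≠ j)
            then T i m * pathProb T k q else 0) := by
    intro m
    by_cases hm : m = j
    · simp [hm]
    · rw [if_neg hm, avoidProb, Finset.mul_sum]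
      apply Finset.sum_congr rfl
      intro q _
      rw [if_neg hm]
      by_cases h : q 0 = m ∧ (∀ t : Fin (k + 1), t ≠ 0 → q t ≠ j)
      · rw [if_pos h, if_pos h]
      · rw [if_neg h, if_neg h, mul_zero]
  rw [Finset.sum_congr rfl fun m _ => hrhs m, Finset.sum_comm]
  apply Finset.sum_congr rfl
  intro q _
  by_cases hq : ∀ s : Fin (k + 1), q s ≠ j
  · have hsingle : (∑ m : Fin n, if m = j then (0:ℝ) else
        if q 0 = m ∧ (∀ t : Fin (k + 1), t ≠ 0 → q t ≠ j)
          then T i m * pathProb T k q else 0)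
        = if q 0 = j then 0 else
            if q 0 = q 0 ∧ (∀ t : Fin (k + 1), t ≠ 0 → q t ≠ j)
              then T i (q 0) * pathProb T k q else 0 :=
      Finset.sum_eq_single (q 0)
        (fun m _ hm => by
          by_cases hmj : m = j
          · rw [if_pos hmj]
          · rw [if_neg hmj, if_neg (fun hc => hm hc.1.symm)])
        (fun h => absurd (Finset.mem_univ _) h)
    rw [hsingle]
    have hq0 : q 0 ≠ j := hq 0
    rw [if_neg hq0, if_pos ⟨rfl, fun t _ => hq t⟩, if_pos ⟨rfl, hq⟩]
  · rw [if_neg (fun hc => hq hc.2)]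
    have hz : ∀ m : Fin n, m ∈ Finset.univ → (if m = j then (0:ℝ) else
        if q 0 = m ∧ (∀ t : Fin (k + 1), t ≠ 0 → q t ≠ j)
          then T i m * pathProb T k q else 0) = 0 := by
      intro m _
      by_cases hmj : m = j
      · rw [if_pos hmj]
      · rw [if_neg hmj, if_neg ?_]
        rintro ⟨h0, h1⟩
        apply hq
        intro s
        rcases eq_or_ne s 0 with rfl | hs
        · rw [h0]; exact hmj
        · exact h1 s hs
    exact Finset.sum_eq_zero hz

lemma firstPassage_nonneg (hS : IsStochastic T) (i j : Fin n) (k : ℕ) :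
    0 ≤ firstPassageProb T i j k := by
  apply Finset.sum_nonneg
  intro p _
  by_cases h : p 0 = i ∧ p (Fin.last k) = j ∧
      (∀ t : Fin (k + 1), t ≠ 0 → t ≠ Fin.last k → p t ≠ j)
  · rw [if_pos h]; exact pathProb_nonneg T hS k p
  · rw [if_neg h]

lemma avoid_nonneg (hS : IsStochastic T) (j i : Fin n) (k : ℕ) :
    0 ≤ avoidProb T j i k := by
  apply Finset.sum_nonneg
  intro p _
  by_cases h : p 0 = i ∧ (∀ t : Fin (k + 1), t ≠ 0 → p t ≠ j)
  · rw [if_pos h]; exact pathProb_nonneg T hS k p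
  · rw [if_neg h]

lemma firstPassage_one (i j : Fin n) : firstPassageProb T i j 1 = T i j := by
  rw [firstPassageProb, sum_cons_eq]
  have hvac : ∀ t : Fin 2, t = 0 ∨ t = Fin.last 1 := by
    intro t
    rcases Fin.eq_zero_or_eq_succ t with h | ⟨s, rfl⟩
    · exact Or.inl h
    · right
      have : s = 0 := Subsingleton.elim s 0
      rw [this]; rfl
  have hsummand : ∀ (x : Fin n) (q : Fin 1 → Fin n),
      (if (Fin.cons x q : Fin 2 → Fin n) 0 = i ∧
          (Fin.cons x q : Fin 2 → Fin n) (Fin.last 1) = j ∧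
          (∀ t : Fin 2, t ≠ 0 → t ≠ Fin.last 1 → (Fin.cons x q : Fin 2 → Fin n) t ≠ j)
        then pathProb T 1 (Fin.cons x q) else 0)
      = if x = i ∧ q 0 = j then T x (q 0) else 0 := by
    intro x q
    have hlast : (Fin.cons x q : Fin 2 → Fin n) (Fin.last 1) = q 0 := by
      have : (Fin.last 1 : Fin 2) = Fin.succ 0 := rfl
      rw [this, Fin.cons_succ]
    by_cases h : x = i ∧ q 0 = j
    · rw [if_pos ?_, pathProb_cons, pathProb_zero, mul_one, if_pos h]
      refine ⟨by simpa using h.1, by rw [hlast]; exact h.2, ?_⟩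
      intro t ht hlt
      rcases hvac t with h' | h'
      · exact absurd h' ht
      · exact absurd h' hlt
    · rw [if_neg ?_, if_neg h]
      rintro ⟨h1, h2, -⟩
      exact h ⟨by simpa using h1, by rw [hlast] at h2; exact h2⟩
  rw [Finset.sum_congr rfl fun x _ => Finset.sum_congr rfl fun q _ => hsummand x q]
  rw [Finset.sum_eq_single i
    (fun x _ hx => Finset.sum_eq_zero fun q _ => if_neg (fun hc => hx hc.1))
    (fun h => absurd (Finset.mem_univ i) h)]
  rw [← Equiv.sum_comp (Equiv.funUnique (Fin 1) (Fin n)).symm]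
  rw [Fintype.sum_congr _ (fun y : Fin n => if y = j then T i y else 0)]
  · rw [Finset.sum_ite_eq' Finset.univ j (fun y => T i y)]
    simp
  · intro y
    by_cases hy : y = j
    · rw [if_pos ⟨rfl, hy⟩, if_pos hy]; rfl
    · rw [if_neg (fun hc => hy hc.2), if_neg hy]

lemma zero_ne_last (k : ℕ) : (0 : Fin (k + 2)) ≠ Fin.last (k + 1) := by
  intro h
  have := congrArg Fin.val h
  simp [Fin.last] at this

lemma firstPassage_succ_succ (i j : Fin n) (k : ℕ) :
    firstPassageProb T i j (k + 2)
      = ∑ m, (if m = j then 0 else T i m * firstPassageProb T m j (k + 1)) := by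
  rw [firstPassageProb, sum_cons_eq]
  have hlast : ∀ (x : Fin n) (q : Fin (k + 2) → Fin n),
      (Fin.cons x q : Fin (k + 3) → Fin n) (Fin.last (k + 2)) = q (Fin.last (k + 1)) := by
    intro x q
    rw [← Fin.succ_last, Fin.cons_succ]
  have hcond : ∀ (x : Fin n) (q : Fin (k + 2) → Fin n),
      ((Fin.cons x q : Fin (k + 3) → Fin n) 0 = i ∧
        (Fin.cons x q : Fin (k + 3) → Fin n) (Fin.last (k + 2)) = j ∧
        (∀ t : Fin (k + 3), t ≠ 0 → t ≠ Fin.last (k + 2) →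
          (Fin.cons x q : Fin (k + 3) → Fin n) t ≠ j))
      ↔ (x = i ∧ q (Fin.last (k + 1)) = j ∧
          ∀ s : Fin (k + 2), s ≠ Fin.last (k + 1) → q s ≠ j) := by
    intro x q
    constructor
    · rintro ⟨h0, h1, h2⟩
      refine ⟨by simpa using h0, by rw [hlast] at h1; exact h1, fun s hs => ?_⟩
      have := h2 s.succ (Fin.succ_ne_zero s) ?_
      · simpa using this
      · rw [← Fin.succ_last]
        exact fun hc => hs (Fin.succ_injective _ hc)
    · rintro ⟨h0, h1, h2⟩
      refine ⟨by simpa using h0, by rw [hlast]; exact h1, fun t ht hlt => ?_⟩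
      rcases Fin.eq_zero_or_eq_succ t with h | ⟨s, rfl⟩
      · exact absurd h ht
      · rw [Fin.cons_succ]
        apply h2
        rw [← Fin.succ_last] at hlt
        exact fun hc => hlt (by rw [hc])
  have hsummand : ∀ (x : Fin n) (q : Fin (k + 2) → Fin n),
      (if (Fin.cons x q : Fin (k + 3) → Fin n) 0 = i ∧
          (Fin.cons x q : Fin (k + 3) → Fin n) (Fin.last (k + 2)) = j ∧
          (∀ t : Fin (k + 3), t ≠ 0 → t ≠ Fin.last (k + 2) →
            (Fin.cons x q : Fin (k + 3) → Fin n) t ≠ j)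
        then pathProb T (k + 2) (Fin.cons x q) else 0)
      = if x = i ∧ q (Fin.last (k + 1)) = j ∧
            ∀ s : Fin (k + 2), s ≠ Fin.last (k + 1) → q s ≠ j
          then T x (q 0) * pathProb T (k + 1) q else 0 := by
    intro x q
    by_cases h : x = i ∧ q (Fin.last (k + 1)) = j ∧
        ∀ s : Fin (k + 2), s ≠ Fin.last (k + 1) → q s ≠ j
    · rw [if_pos ((hcond x q).mpr h), if_pos h, pathProb_cons]
    · rw [if_neg (fun hc => h ((hcond x q).mp hc)), if_neg h]
  rw [Finset.sum_congr rfl fun x _ => Finset.sum_congr rfl fun q _ => hsummand x q]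
  rw [Finset.sum_eq_single i
    (fun x _ hx => Finset.sum_eq_zero fun q _ => if_neg (fun hc => hx hc.1))
    (fun h => absurd (Finset.mem_univ i) h)]
  symm
  have hrhs : ∀ m, (if m = j then 0 else T i m * firstPassageProb T m j (k + 1))
      = ∑ q : Fin (k + 2) → Fin n, (if m = j then 0 else
          if q 0 = m ∧ q (Fin.last (k + 1)) = j ∧
              (∀ t : Fin (k + 2), t ≠ 0 → t ≠ Fin.last (k + 1) → q t ≠ j)
            then T i m * pathProb T (k + 1) q else 0) := by
    intro m
    by_cases hm : m = j
    · simp [hm]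
    · rw [if_neg hm, firstPassageProb, Finset.mul_sum]
      apply Finset.sum_congr rfl
      intro q _
      rw [if_neg hm]
      by_cases h : q 0 = m ∧ q (Fin.last (k + 1)) = j ∧
          (∀ t : Fin (k + 2), t ≠ 0 → t ≠ Fin.last (k + 1) → q t ≠ j)
      · rw [if_pos h, if_pos h]
      · rw [if_neg h, if_neg h, mul_zero]
  rw [Finset.sum_congr rfl fun m _ => hrhs m, Finset.sum_comm]
  apply Finset.sum_congr rfl
  intro q _
  by_cases hq : q (Fin.last (k + 1)) = j ∧
      ∀ s : Fin (k + 2), s ≠ Fin.last (k + 1) → q s ≠ j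
  · have hq0 : q 0 ≠ j := hq.2 0 (zero_ne_last k)
    have hsingle : (∑ m : Fin n, if m = j then (0:ℝ) else
        if q 0 = m ∧ q (Fin.last (k + 1)) = j ∧
            (∀ t : Fin (k + 2), t ≠ 0 → t ≠ Fin.last (k + 1) → q t ≠ j)
          then T i m * pathProb T (k + 1) q else 0)
        = if q 0 = j then 0 else
            if q 0 = q 0 ∧ q (Fin.last (k + 1)) = j ∧
                (∀ t : Fin (k + 2), t ≠ 0 → t ≠ Fin.last (k + 1) → q t ≠ j)
              then T i (q 0) * pathProb T (k + 1) q else 0 :=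
      Finset.sum_eq_single (q 0)
        (fun m _ hm => by
          by_cases hmj : m = j
          · rw [if_pos hmj]
          · rw [if_neg hmj, if_neg (fun hc => hm hc.1.symm)])
        (fun h => absurd (Finset.mem_univ _) h)
    rw [hsingle, if_neg hq0, if_pos ⟨rfl, hq.1, fun t _ ht => hq.2 t ht⟩,
      if_pos ⟨rfl, hq.1, hq.2⟩]
  · rw [if_neg (fun hc => hq ⟨hc.2.1, hc.2.2⟩)]
    have hz : ∀ m : Fin n, m ∈ Finset.univ → (if m = j then (0:ℝ) else
        if q 0 = m ∧ q (Fin.last (k + 1)) = j ∧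
            (∀ t : Fin (k + 2), t ≠ 0 → t ≠ Fin.last (k + 1) → q t ≠ j)
          then T i m * pathProb T (k + 1) q else 0) = 0 := by
      intro m _
      by_cases hmj : m = j
      · rw [if_pos hmj]
      · rw [if_neg hmj, if_neg ?_]
        rintro ⟨h0, h1, h2⟩
        apply hq
        refine ⟨h1, fun s hs => ?_⟩
        rcases eq_or_ne s 0 with rfl | hs0
        · rw [h0]; exact hmj
        · exact h2 s hs0 hs
    exact Finset.sum_eq_zero hz

lemma pow_row_sum (hS : IsStochastic T) : ∀ (k : ℕ) (i : Fin n), ∑ l, (T ^ k) i l = 1 := by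
  intro k
  induction k with
  | zero => intro i; simp [Matrix.one_apply]
  | succ k ih =>
      intro i
      have : ∀ l, (T ^ (k + 1)) i l = ∑ m, (T ^ k) i m * T m l := by
        intro l; rw [pow_succ, Matrix.mul_apply]
      rw [Finset.sum_congr rfl fun l _ => this l, Finset.sum_comm]
      calc ∑ m, ∑ l, (T ^ k) i m * T m l = ∑ m, (T ^ k) i m := by
            apply Finset.sum_congr rfl
            intro m _
            rw [← Finset.mul_sum, hS.2 m, mul_one]
        _ = 1 := ih i

lemma avoid_decomp (hS : IsStochastic T) (j : Fin n) :
    ∀ (k : ℕ) (i : Fin n), avoidProb T j i k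
      = avoidProb T j i (k + 1) + firstPassageProb T i j (k + 1) := by
  intro k
  induction k with
  | zero =>
      intro i
      rw [avoidProb_zero, avoidProb_succ T hS, firstPassage_one]
      have : ∀ m : Fin n, (if m = j then (0:ℝ) else T i m * avoidProb T j m 0)
          + (if m = j then T i j else 0) = T i m := by
        intro m
        by_cases h : m = j
        · rw [if_pos h, if_pos h, zero_add, h]
        · rw [if_neg h, if_neg h, add_zero, avoidProb_zero, mul_one]
      calc (1:ℝ) = ∑ m, T i m := (hS.2 i).symm
        _ = ∑ m, ((if m = j then (0:ℝ) else T i m * avoidProb T j m 0)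
              + (if m = j then T i j else 0)) := by
            exact (Finset.sum_congr rfl fun m _ => this m).symm
        _ = (∑ m, if m = j then (0:ℝ) else T i m * avoidProb T j m 0)
              + ∑ m, (if m = j then T i j else 0) := Finset.sum_add_distrib
        _ = (∑ m, if m = j then (0:ℝ) else T i m * avoidProb T j m 0) + T i j := by
            rw [Finset.sum_ite_eq' Finset.univ j (fun _ => T i j)]
            simp
  | succ k ih =>
      intro i
      rw [avoidProb_succ T hS, avoidProb_succ T hS, firstPassage_succ_succ,
        ← Finset.sum_add_distrib]
      apply Finset.sum_congr rfl
      intro m _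
      by_cases h : m = j
      · rw [if_pos h, if_pos h, if_pos h, add_zero]
      · rw [if_neg h, if_neg h, if_neg h, ← mul_add, ← ih m]

lemma avoid_partial_sum (hS : IsStochastic T) (j i : Fin n) (k : ℕ) :
    ∑ m ∈ Finset.range k, firstPassageProb T i j (m + 1) = 1 - avoidProb T j i k := by
  induction k with
  | zero => rw [Finset.sum_range_zero, avoidProb_zero, sub_self]
  | succ k ih =>
      rw [Finset.sum_range_succ, ih, avoid_decomp T hS j k i]
      ring

lemma avoid_step (hS : IsStochastic T) (j i : Fin n) (k : ℕ) :
    avoidProb T j i (k + 1) ≤ avoidProb T j i k := by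
  rw [avoid_decomp T hS j k i]
  have := firstPassage_nonneg T hS i j (k + 1)
  linarith

lemma avoid_antitone (hS : IsStochastic T) (j i : Fin n) {k k' : ℕ} (h : k ≤ k') :
    avoidProb T j i k' ≤ avoidProb T j i k := by
  induction h with
  | refl => exact le_refl _
  | step h ih => exact le_trans (avoid_step T hS j i _) ih

lemma pow_path_sum : ∀ (k : ℕ) (i l : Fin n), (T ^ k) i l
    = ∑ p : Fin (k + 1) → Fin n,
        if p 0 = i ∧ p (Fin.last k) = l then pathProb T k p else 0 := by
  intro k
  induction k with
  | zero =>
      intro i l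
      rw [pow_zero, Matrix.one_apply]
      rw [← Equiv.sum_comp (Equiv.funUnique (Fin 1) (Fin n)).symm]
      rw [Fintype.sum_congr _ (fun y : Fin n => if y = i ∧ y = l then (1:ℝ) else 0)]
      · rw [Finset.sum_eq_single i (fun y _ hy => if_neg (fun hc => hy hc.1))
          (fun h => absurd (Finset.mem_univ i) h)]
        by_cases h : i = l
        · rw [if_pos h, if_pos (⟨rfl, h⟩ : i = i ∧ i = l)]
        · rw [if_neg h, if_neg (fun hc : i = i ∧ i = l => h hc.2)]
      · intro y
        by_cases hy : y = i ∧ y = l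
        · rw [if_pos ?_, pathProb_zero, if_pos hy]
          exact ⟨hy.1, hy.2⟩
        · rw [if_neg ?_, if_neg hy]
          rintro ⟨h1, h2⟩
          exact hy ⟨h1, h2⟩
  | succ k ih =>
      intro i l
      have hstep : (T ^ (k + 1)) i l = ∑ m, T i m * (T ^ k) m l := by
        rw [pow_succ', Matrix.mul_apply]
      rw [hstep, sum_cons_eq]
      have hlast : ∀ (x : Fin n) (q : Fin (k + 1) → Fin n),
          (Fin.cons x q : Fin (k + 2) → Fin n) (Fin.last (k + 1)) = q (Fin.last k) := by
        intro x q
        rw [← Fin.succ_last, Fin.cons_succ]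
      have hsummand : ∀ (x : Fin n) (q : Fin (k + 1) → Fin n),
          (if (Fin.cons x q : Fin (k + 2) → Fin n) 0 = i ∧
              (Fin.cons x q : Fin (k + 2) → Fin n) (Fin.last (k + 1)) = l
            then pathProb T (k + 1) (Fin.cons x q) else 0)
          = if x = i ∧ q (Fin.last k) = l then T x (q 0) * pathProb T k q else 0 := by
        intro x q
        by_cases h : x = i ∧ q (Fin.last k) = l
        · rw [if_pos ?_, pathProb_cons, if_pos h]
          exact ⟨by simpa using h.1, by rw [hlast]; exact h.2⟩
        · rw [if_neg ?_, if_neg h]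
          rintro ⟨h1, h2⟩
          exact h ⟨by simpa using h1, by rw [hlast] at h2; exact h2⟩
      rw [Finset.sum_congr rfl fun x _ => Finset.sum_congr rfl fun q _ => hsummand x q]
      rw [Finset.sum_eq_single i
        (fun x _ hx => Finset.sum_eq_zero fun q _ => if_neg (fun hc => hx hc.1))
        (fun h => absurd (Finset.mem_univ i) h)]
      symm
      have hrhs : ∀ m, T i m * (T ^ k) m l
          = ∑ q : Fin (k + 1) → Fin n,
              (if q 0 = m ∧ q (Fin.last k) = l then T i m * pathProb T k q else 0) := by
        intro m
        rw [ih m l, Finset.mul_sum]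
        apply Finset.sum_congr rfl
        intro q _
        by_cases h : q 0 = m ∧ q (Fin.last k) = l
        · rw [if_pos h, if_pos h]
        · rw [if_neg h, if_neg h, mul_zero]
      rw [Finset.sum_congr rfl fun m _ => hrhs m, Finset.sum_comm]
      apply Finset.sum_congr rfl
      intro q _
      rw [Finset.sum_eq_single (q 0)
        (fun m _ hm => if_neg (fun hc => hm hc.1.symm))
        (fun h => absurd (Finset.mem_univ _) h)]
      by_cases h : q (Fin.last k) = l
      · rw [if_pos ⟨rfl, h⟩, if_pos ⟨rfl, h⟩]
      · rw [if_neg (fun hc => h hc.2), if_neg (fun hc => h hc.2)]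

lemma avoid_add_pow_le_one (hS : IsStochastic T) (j i : Fin n) (N : ℕ) :
    avoidProb T j i (N + 1) + (T ^ (N + 1)) i j ≤ 1 := by
  have htot : ∑ p : Fin (N + 2) → Fin n,
      (if p 0 = i then pathProb T (N + 1) p else 0) = 1 := by
    have hper : ∀ p : Fin (N + 2) → Fin n, (if p 0 = i then pathProb T (N + 1) p else 0)
        = ∑ l, (if p 0 = i ∧ p (Fin.last (N + 1)) = l then pathProb T (N + 1) p else 0) := by
      intro p
      by_cases h : p 0 = i
      · rw [if_pos h]
        symm
        rw [Finset.sum_eq_single (p (Fin.last (N + 1)))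
          (fun l _ hl => if_neg (fun hc => hl hc.2.symm))
          (fun hm => absurd (Finset.mem_univ _) hm)]
        rw [if_pos ⟨h, rfl⟩]
      · rw [if_neg h]
        symm
        exact Finset.sum_eq_zero fun l _ => if_neg (fun hc => h hc.1)
    rw [Finset.sum_congr rfl fun p _ => hper p, Finset.sum_comm]
    rw [Finset.sum_congr rfl fun l _ => (pow_path_sum T (N + 1) i l).symm]
    exact pow_row_sum T hS (N + 1) i
  rw [← htot, avoidProb, pow_path_sum, ← Finset.sum_add_distrib]
  apply Finset.sum_le_sum
  intro p _
  by_cases hA : p 0 = i ∧ (∀ t : Fin (N + 2), t ≠ 0 → p t ≠ j)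
  · rw [if_pos hA]
    have hlastj : p (Fin.last (N + 1)) ≠ j := hA.2 _ (zero_ne_last N).symm
    rw [if_neg (fun hc => hlastj hc.2), add_zero, if_pos hA.1]
  · rw [if_neg hA, zero_add]
    by_cases hB : p 0 = i ∧ p (Fin.last (N + 1)) = j
    · rw [if_pos hB, if_pos hB.1]
    · rw [if_neg hB]
      by_cases hC : p 0 = i
      · rw [if_pos hC]; exact pathProb_nonneg T hS _ p
      · rw [if_neg hC]

lemma avoid_decay (hS : IsStochastic T) (j : Fin n) (N : ℕ) (ε : ℝ)
    (hε : ∀ i, ε ≤ (T ^ (N + 1)) i j) :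
    ∀ (k : ℕ) (i : Fin n),
      avoidProb T j i (k + (N + 1)) ≤ (1 - ε) * avoidProb T j i k := by
  intro k
  induction k with
  | zero =>
      intro i
      rw [Nat.zero_add, avoidProb_zero, mul_one]
      have h1 := avoid_add_pow_le_one T hS j i N
      have h2 := hε i
      linarith
  | succ k ih =>
      intro i
      have hidx : k + 1 + (N + 1) = (k + (N + 1)) + 1 := by omega
      rw [hidx, avoidProb_succ T hS, avoidProb_succ T hS, Finset.mul_sum]
      apply Finset.sum_le_sum
      intro m _
      by_cases h : m = j
      · rw [if_pos h, if_pos h, mul_zero]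
      · rw [if_neg h, if_neg h]
        calc T i m * avoidProb T j m (k + (N + 1))
            ≤ T i m * ((1 - ε) * avoidProb T j m k) :=
              mul_le_mul_of_nonneg_left (ih m) (hS.1 i m)
          _ = (1 - ε) * (T i m * avoidProb T j m k) := by ring

lemma avoid_le_geom (hS : IsStochastic T) (j : Fin n) (N : ℕ) (ε : ℝ)
    (hε : ∀ i, ε ≤ (T ^ (N + 1)) i j) (hε1 : ε ≤ 1) :
    ∀ (q : ℕ) (i : Fin n), avoidProb T j i (q * (N + 1)) ≤ (1 - ε) ^ q := by
  intro q
  induction q with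
  | zero => intro i; rw [Nat.zero_mul, avoidProb_zero, pow_zero]
  | succ q ih =>
      intro i
      have hidx : (q + 1) * (N + 1) = q * (N + 1) + (N + 1) := by ring
      rw [hidx, pow_succ]
      calc avoidProb T j i (q * (N + 1) + (N + 1))
          ≤ (1 - ε) * avoidProb T j i (q * (N + 1)) := avoid_decay T hS j N ε hε _ i
        _ ≤ (1 - ε) * (1 - ε) ^ q := mul_le_mul_of_nonneg_left (ih i) (by linarith)
        _ = (1 - ε) ^ q * (1 - ε) := mul_comm _ _

lemma avoid_le_geom' (hS : IsStochastic T) (j : Fin n) (N : ℕ) (ε : ℝ)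
    (hε : ∀ i, ε ≤ (T ^ (N + 1)) i j) (hε1 : ε ≤ 1) (k : ℕ) (i : Fin n) :
    avoidProb T j i k ≤ (1 - ε) ^ (k / (N + 1)) := by
  calc avoidProb T j i k
      ≤ avoidProb T j i ((k / (N + 1)) * (N + 1)) :=
        avoid_antitone T hS j i (Nat.div_mul_le_self k (N + 1))
    _ ≤ (1 - ε) ^ (k / (N + 1)) := avoid_le_geom T hS j N ε hε hε1 _ i

lemma avoid_tendsto_zero (hS : IsStochastic T) (j : Fin n) (N : ℕ) (ε : ℝ)
    (hε : ∀ i, ε ≤ (T ^ (N + 1)) i j) (hεpos : 0 < ε) (hε1 : ε ≤ 1) (i : Fin n) :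
    Filter.Tendsto (fun k => avoidProb T j i k) Filter.atTop (nhds 0) := by
  have hρ0 : (0:ℝ) ≤ 1 - ε := by linarith
  have hρ1 : 1 - ε < 1 := by linarith
  have hgeom : Filter.Tendsto (fun q : ℕ => (1 - ε) ^ q) Filter.atTop (nhds 0) :=
    tendsto_pow_atTop_nhds_zero_of_lt_one hρ0 hρ1
  have hdiv : Filter.Tendsto (fun k : ℕ => k / (N + 1)) Filter.atTop Filter.atTop := by
    apply Filter.tendsto_atTop.2
    intro b
    apply Filter.eventually_atTop.2
    refine ⟨b * (N + 1), fun k hk => ?_⟩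
    exact (Nat.le_div_iff_mul_le (Nat.succ_pos N)).2 hk
  have hcomp := hgeom.comp hdiv
  apply squeeze_zero (fun k => avoid_nonneg T hS j i k)
    (fun k => avoid_le_geom' T hS j N ε hε hε1 k i) hcomp

lemma hasSum_firstPassage (hS : IsStochastic T) (j : Fin n) (N : ℕ) (ε : ℝ)
    (hε : ∀ i, ε ≤ (T ^ (N + 1)) i j) (hεpos : 0 < ε) (hε1 : ε ≤ 1) (i : Fin n) :
    HasSum (fun k => firstPassageProb T i j (k + 1)) 1 := by
  rw [hasSum_iff_tendsto_nat_of_nonneg (fun k => firstPassage_nonneg T hS i j (k + 1)) 1]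
  have h1 : Filter.Tendsto (fun M => 1 - avoidProb T j i M) Filter.atTop (nhds (1 - 0)) :=
    Filter.Tendsto.sub tendsto_const_nhds
      (avoid_tendsto_zero T hS j N ε hε hεpos hε1 i)
  rw [sub_zero] at h1
  exact h1.congr (fun M => (avoid_partial_sum T hS j i M).symm)

lemma summable_weighted (hS : IsStochastic T) (j : Fin n) (N : ℕ) (ε : ℝ)
    (hε : ∀ i, ε ≤ (T ^ (N + 1)) i j) (hεpos : 0 < ε) (hε1 : ε ≤ 1) (i : Fin n) :
    Summable (fun k : ℕ => (k : ℝ) * firstPassageProb T i j k) := by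
  classical
  set ρ := 1 - ε with hρ
  have hρ0 : (0:ℝ) ≤ ρ := by rw [hρ]; linarith
  have hρ1 : ρ < 1 := by rw [hρ]; linarith
  set h : ℕ → ℝ := fun q => ((q:ℝ) + 1) * ((N:ℝ) + 1) * ρ ^ q with hh
  have hg : Summable h := by
    have h1 : Summable (fun q : ℕ => (q:ℝ) * ρ ^ q) := by
      have := summable_pow_mul_geometric_of_norm_lt_one 1 (r := ρ)
        (by rw [Real.norm_eq_abs, abs_of_nonneg hρ0]; exact hρ1)
      exact this.congr (fun q => by rw [pow_one])
    have h2 : Summable (fun q : ℕ => ρ ^ q) := summable_geometric_of_lt_one hρ0 hρ1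
    have := (h1.mul_left ((N:ℝ) + 1)).add (h2.mul_left ((N:ℝ) + 1))
    exact this.congr (fun q => by rw [hh]; ring)
  have hhnn : ∀ q, 0 ≤ h q := by
    intro q; rw [hh]; positivity
  set C := ∑' q, h q with hC
  have hCnn : 0 ≤ C := tsum_nonneg hhnn
  apply summable_of_sum_range_le (c := ((N:ℝ) + 1) * C)
  · intro k
    exact mul_nonneg (Nat.cast_nonneg k) (firstPassage_nonneg T hS i j k)
  · intro M
    -- termwise bound for k = m + 1
    have hterm : ∀ m : ℕ, ((m + 1 : ℕ) : ℝ) * firstPassageProb T i j (m + 1)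
        ≤ h (m / (N + 1)) := by
      intro m
      have hP : firstPassageProb T i j (m + 1) ≤ avoidProb T j i m := by
        have := avoid_decomp T hS j m i
        have := avoid_nonneg T hS j i (m + 1)
        linarith
      have hB : avoidProb T j i m ≤ ρ ^ (m / (N + 1)) :=
        avoid_le_geom' T hS j N ε hε hε1 m i
      have hk : ((m + 1 : ℕ) : ℝ) ≤ ((m / (N + 1) : ℕ) : ℝ) * ((N:ℝ) + 1) + ((N:ℝ) + 1) := by
        have hnat : m + 1 ≤ (N + 1) * (m / (N + 1)) + (N + 1) := by
          have h1 := Nat.div_add_mod m (N + 1)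
          have h2 : m % (N + 1) < N + 1 := Nat.mod_lt m (show 0 < N + 1 by omega)
          omega
        calc ((m + 1 : ℕ) : ℝ) ≤ (((N + 1) * (m / (N + 1)) + (N + 1) : ℕ) : ℝ) := by
              exact_mod_cast hnat
          _ = ((m / (N + 1) : ℕ) : ℝ) * ((N:ℝ) + 1) + ((N:ℝ) + 1) := by push_cast; ring
      have hPnn := firstPassage_nonneg T hS i j (m + 1)
      have hρpow : (0:ℝ) ≤ ρ ^ (m / (N + 1)) := pow_nonneg hρ0 _
      calc ((m + 1 : ℕ) : ℝ) * firstPassageProb T i j (m + 1)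
          ≤ ((m + 1 : ℕ) : ℝ) * ρ ^ (m / (N + 1)) := by
            apply mul_le_mul_of_nonneg_left (le_trans hP hB) (Nat.cast_nonneg _)
        _ ≤ (((m / (N + 1) : ℕ) : ℝ) * ((N:ℝ) + 1) + ((N:ℝ) + 1)) * ρ ^ (m / (N + 1)) :=
            mul_le_mul_of_nonneg_right hk hρpow
        _ = h (m / (N + 1)) := by rw [hh]; ring
    -- sum over the range
    rcases M with _ | M'
    · rw [Finset.sum_range_zero]; positivity
    rw [Finset.sum_range_succ']
    have hz : ((0:ℕ):ℝ) * firstPassageProb T i j 0 = 0 := by norm_num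
    rw [hz, add_zero]
    have hb1 : ∑ m ∈ Finset.range M', ((m + 1 : ℕ) : ℝ) * firstPassageProb T i j (m + 1)
        ≤ ∑ m ∈ Finset.range M', h (m / (N + 1)) :=
      Finset.sum_le_sum (fun m _ => hterm m)
    -- fiber-counting bound
    have hb2 : ∑ m ∈ Finset.range M', h (m / (N + 1)) ≤ ((N:ℝ) + 1) * C := by
      set φ : ℕ × ℕ → ℕ := fun qr => (N + 1) * qr.1 + qr.2 with hφ
      set s := Finset.range M' ×ˢ Finset.range (N + 1) with hs
      have hsub : Finset.range M' ⊆ s.image φ := by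
        intro m hm
        rw [Finset.mem_image]
        refine ⟨(m / (N + 1), m % (N + 1)), ?_, ?_⟩
        · rw [hs, Finset.mem_product]
          constructor
          · rw [Finset.mem_range] at hm ⊢
            exact lt_of_le_of_lt (Nat.div_le_self m (N + 1)) hm
          · rw [Finset.mem_range]
            exact Nat.mod_lt m (show 0 < N + 1 by omega)
        · rw [hφ]
          exact Nat.div_add_mod m (N + 1)
      have hdiv' : ∀ q r : ℕ, r < N + 1 → ((N + 1) * q + r) / (N + 1) = q := by
        intro q r hr
        rw [Nat.mul_add_div (show 0 < N + 1 by omega), Nat.div_eq_of_lt hr, add_zero]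
      have hinj : Set.InjOn φ s := by
        intro a ha b hb hab
        have hab' : (N + 1) * a.1 + a.2 = (N + 1) * b.1 + b.2 := hab
        rw [hs, Finset.coe_product] at ha hb
        simp only [Set.mem_prod, Finset.coe_range, Set.mem_Iio] at ha hb
        have h1 : a.1 = b.1 := by
          have hda := hdiv' a.1 a.2 ha.2
          have hdb := hdiv' b.1 b.2 hb.2
          rw [← hda, ← hdb, hab']
        have h2 : a.2 = b.2 := by
          rw [h1] at hab'
          omega
        exact Prod.ext h1 h2
      calc ∑ m ∈ Finset.range M', h (m / (N + 1))
          ≤ ∑ m ∈ s.image φ, h (m / (N + 1)) :=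
            Finset.sum_le_sum_of_subset_of_nonneg hsub (fun m _ _ => hhnn _)
        _ = ∑ qr ∈ s, h (φ qr / (N + 1)) := Finset.sum_image (fun a ha b hb => hinj ha hb)
        _ = ∑ qr ∈ s, h qr.1 := by
            apply Finset.sum_congr rfl
            intro qr hqr
            congr 1
            rw [hφ]
            rw [hs, Finset.mem_product, Finset.mem_range, Finset.mem_range] at hqr
            rw [Nat.mul_add_div (Nat.succ_pos N), Nat.div_eq_of_lt hqr.2, add_zero]
        _ = ∑ q ∈ Finset.range M', ∑ r ∈ Finset.range (N + 1), h q := by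
            rw [hs, Finset.sum_product]
        _ = ∑ q ∈ Finset.range M', ((N:ℝ) + 1) * h q := by
            apply Finset.sum_congr rfl
            intro q _
            rw [Finset.sum_const, Finset.card_range, nsmul_eq_mul]
            push_cast; ring
        _ = ((N:ℝ) + 1) * ∑ q ∈ Finset.range M', h q := by rw [← Finset.mul_sum]
        _ ≤ ((N:ℝ) + 1) * C := by
            apply mul_le_mul_of_nonneg_left _ (by positivity)
            exact Summable.sum_le_tsum _ (fun q _ => hhnn q) hg
    calc ∑ m ∈ Finset.range M', ((m + 1 : ℕ) : ℝ) * firstPassageProb T i j (m + 1)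
        ≤ ∑ m ∈ Finset.range M', h (m / (N + 1)) := hb1
      _ ≤ ((N:ℝ) + 1) * C := hb2

lemma mfpt_shift (hS : IsStochastic T) (j : Fin n) (N : ℕ) (ε : ℝ)
    (hε : ∀ i, ε ≤ (T ^ (N + 1)) i j) (hεpos : 0 < ε) (hε1 : ε ≤ 1) (i : Fin n) :
    mfpt T i j = ∑' k : ℕ, ((k:ℝ) + 1) * firstPassageProb T i j (k + 1) := by
  rw [mfpt, Summable.tsum_eq_zero_add (summable_weighted T hS j N ε hε hεpos hε1 i)]
  rw [Nat.cast_zero, zero_mul, zero_add]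
  apply tsum_congr
  intro k
  push_cast
  ring

lemma summable_shift (hS : IsStochastic T) (j : Fin n) (N : ℕ) (ε : ℝ)
    (hε : ∀ i, ε ≤ (T ^ (N + 1)) i j) (hεpos : 0 < ε) (hε1 : ε ≤ 1) (l : Fin n) :
    Summable (fun k : ℕ => ((k:ℝ) + 1) * firstPassageProb T l j (k + 1)) := by
  have h := (summable_nat_add_iff 1).mpr (summable_weighted T hS j N ε hε hεpos hε1 l)
  exact h.congr (fun k => by push_cast; ring)

lemma mfpt_rec (hS : IsStochastic T) (j : Fin n) (N : ℕ) (ε : ℝ)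
    (hε : ∀ i, ε ≤ (T ^ (N + 1)) i j) (hεpos : 0 < ε) (hε1 : ε ≤ 1) (i : Fin n) :
    mfpt T i j = 1 + ∑ l, (if l = j then 0 else T i l * mfpt T l j) := by
  classical
  have hhit := fun l => hasSum_firstPassage T hS j N ε hε hεpos hε1 l
  have hshift := fun l => summable_shift T hS j N ε hε hεpos hε1 l
  have hmsh := fun l => mfpt_shift T hS j N ε hε hεpos hε1 l
  rw [hmsh i, Summable.tsum_eq_zero_add (hshift i)]
  have hkey : ∀ k : ℕ, ((((k+1:ℕ)):ℝ) + 1) * firstPassageProb T i j ((k + 1) + 1)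
      = ∑ l, (if l = j then (0:ℝ)
          else ((k:ℝ) + 2) * (T i l * firstPassageProb T l j (k + 1))) := by
    intro k
    rw [show (k + 1) + 1 = k + 2 from rfl, firstPassage_succ_succ, Finset.mul_sum]
    apply Finset.sum_congr rfl
    intro l _
    by_cases h : l = j
    · rw [if_pos h, if_pos h, mul_zero]
    · rw [if_neg h, if_neg h]
      push_cast
      ring
  rw [tsum_congr hkey]
  have hsuml : ∀ l ∈ Finset.univ, Summable (fun k : ℕ => if l = j then (0:ℝ)
      else ((k:ℝ) + 2) * (T i l * firstPassageProb T l j (k + 1))) := by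
    intro l _
    by_cases h : l = j
    · simp only [if_pos h]
      exact summable_zero
    · simp only [if_neg h]
      have hbase : Summable (fun k : ℕ => ((k:ℝ) + 1) * firstPassageProb T l j (k + 1)
          + firstPassageProb T l j (k + 1)) := (hshift l).add (hhit l).summable
      exact (hbase.mul_left (T i l)).congr (fun k => by ring)
  rw [Summable.tsum_finsetSum hsuml]
  have hval : ∀ l, (∑' k : ℕ, if l = j then (0:ℝ)
      else ((k:ℝ) + 2) * (T i l * firstPassageProb T l j (k + 1)))
      = if l = j then 0 else T i l * (mfpt T l j + 1) := by
    intro l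
    by_cases h : l = j
    · simp [h]
    · simp only [if_neg h]
      have e1 : ∀ k : ℕ, ((k:ℝ) + 2) * (T i l * firstPassageProb T l j (k + 1))
          = T i l * (((k:ℝ) + 1) * firstPassageProb T l j (k + 1)
              + firstPassageProb T l j (k + 1)) := by
        intro k; ring
      rw [tsum_congr e1, tsum_mul_left, Summable.tsum_add (hshift l) (hhit l).summable,
        (hhit l).tsum_eq, ← hmsh l]
  rw [Finset.sum_congr rfl (fun l _ => hval l), firstPassage_one]
  have expand : ∀ l, (if l = j then (0:ℝ) else T i l * (mfpt T l j + 1))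
      = (if l = j then 0 else T i l * mfpt T l j) + (if l = j then 0 else T i l) := by
    intro l
    by_cases h : l = j
    · simp [h]
    · simp only [if_neg h]; ring
  rw [Finset.sum_congr rfl (fun l _ => expand l), Finset.sum_add_distrib]
  have hsum3 : ∑ l, (if l = j then (0:ℝ) else T i l) = 1 - T i j := by
    have hl : ∀ l, (if l = j then (0:ℝ) else T i l)
        = T i l - (if l = j then T i j else 0) := by
      intro l
      by_cases h : l = j
      · rw [if_pos h, if_pos h, h, sub_self]
      · rw [if_neg h, if_neg h, sub_zero]
    rw [Finset.sum_congr rfl fun l _ => hl l, Finset.sum_sub_distrib, hS.2 i,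
      Finset.sum_ite_eq' Finset.univ j (fun _ => T i j)]
    simp
  rw [hsum3]
  push_cast
  ring

lemma kac (hS : IsStochastic T) (j : Fin n) (N : ℕ) (ε : ℝ)
    (hε : ∀ i, ε ≤ (T ^ (N + 1)) i j) (hεpos : 0 < ε) (hε1 : ε ≤ 1) :
    treeWeight T j * mfpt T j j = ∑ i, treeWeight T i := by
  classical
  have hrec := fun i => mfpt_rec T hS j N ε hε hεpos hε1 i
  have e1 : ∑ i, treeWeight T i * mfpt T i j
      = ∑ i, treeWeight T i + ∑ l, (if l = j then 0 else treeWeight T l * mfpt T l j) := by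
    calc ∑ i, treeWeight T i * mfpt T i j
        = ∑ i, (treeWeight T i + ∑ l, (if l = j then (0:ℝ)
            else treeWeight T i * (T i l * mfpt T l j))) := by
          apply Finset.sum_congr rfl
          intro i _
          rw [hrec i, mul_add, mul_one, Finset.mul_sum]
          congr 1
          apply Finset.sum_congr rfl
          intro l _
          by_cases h : l = j
          · rw [if_pos h, if_pos h, mul_zero]
          · rw [if_neg h, if_neg h]
      _ = ∑ i, treeWeight T i + ∑ i, ∑ l, (if l = j then (0:ℝ)
            else treeWeight T i * (T i l * mfpt T l j)) := Finset.sum_add_distrib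
      _ = ∑ i, treeWeight T i + ∑ l, ∑ i, (if l = j then (0:ℝ)
            else treeWeight T i * (T i l * mfpt T l j)) := by rw [Finset.sum_comm]
      _ = ∑ i, treeWeight T i + ∑ l, (if l = j then (0:ℝ)
            else (∑ i, treeWeight T i * T i l) * mfpt T l j) := by
          congr 1
          apply Finset.sum_congr rfl
          intro l _
          by_cases h : l = j
          · rw [if_pos h]
            exact Finset.sum_eq_zero fun i _ => if_pos h
          · simp only [if_neg h]
            rw [Finset.sum_mul]
            apply Finset.sum_congr rfl
            intro i _
            ring
      _ = ∑ i, treeWeight T i + ∑ l, (if l = j then (0:ℝ)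
            else treeWeight T l * mfpt T l j) := by
          congr 1
          apply Finset.sum_congr rfl
          intro l _
          by_cases h : l = j
          · rw [if_pos h, if_pos h]
          · rw [if_neg h, if_neg h, tree_stationary T hS l]
  have e2 : ∑ i, treeWeight T i * mfpt T i j
      = treeWeight T j * mfpt T j j
        + ∑ l, (if l = j then (0:ℝ) else treeWeight T l * mfpt T l j) := by
    have hsplit : ∀ i, treeWeight T i * mfpt T i j
        = (if i = j then treeWeight T j * mfpt T j j else 0)
          + (if i = j then 0 else treeWeight T i * mfpt T i j) := by
      intro i
      by_cases h : i = j
      · rw [if_pos h, if_pos h, add_zero, h]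
      · rw [if_neg h, if_neg h, zero_add]
    rw [Finset.sum_congr rfl fun i _ => hsplit i, Finset.sum_add_distrib,
      Finset.sum_ite_eq' Finset.univ j (fun _ => treeWeight T j * mfpt T j j)]
    simp
  linarith [e1, e2]

end Paths

/-! ## Main theorem -/

theorem mean_return_time' (T : Matrix (Fin n) (Fin n) ℝ)
    (hS : IsStochastic T) (hIrr : IsIrreducible T) (hErg : IsErgodic T) :
    ∀ j, sigmaW T (n - 1) = ∑ k, treeWeight T k ∧
      mfpt T j j = sigmaW T (n - 1) / treeWeight T j := by
  intro j
  have hn : 0 < n := j.pos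
  have hA := sigma_eq_sum_tree T hn
  refine ⟨hA, ?_⟩
  classical
  obtain ⟨N₀, hN₀⟩ := hErg
  have hstep : ∀ M : ℕ, (∀ a b, 0 < (T ^ M) a b) → ∀ a b, 0 < (T ^ (M + 1)) a b := by
    intro M hM a b
    rw [pow_succ', Matrix.mul_apply]
    obtain ⟨m, hm⟩ : ∃ m, 0 < T a m := by
      by_contra hc
      push_neg at hc
      have hz : ∑ m, T a m = 0 :=
        le_antisymm (Finset.sum_nonpos fun m _ => hc m)
          (Finset.sum_nonneg fun m _ => hS.1 a m)
      rw [hS.2 a] at hz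
      norm_num at hz
    apply Finset.sum_pos'
    · intro c _
      exact mul_nonneg (hS.1 a c) (hM c b).le
    · exact ⟨m, Finset.mem_univ m, mul_pos hm (hM m b)⟩
  have hN : ∀ a b, 0 < (T ^ (N₀ + 1)) a b := hstep N₀ hN₀
  obtain ⟨i₀, -, hi₀⟩ := Finset.exists_min_image Finset.univ
    (fun i => (T ^ (N₀ + 1)) i j) ⟨j, Finset.mem_univ j⟩
  set ε := (T ^ (N₀ + 1)) i₀ j with hεdef
  have hεpos : 0 < ε := hN i₀ j
  have hε : ∀ i, ε ≤ (T ^ (N₀ + 1)) i j := fun i => hi₀ i (Finset.mem_univ i)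
  have hε1 : ε ≤ 1 := by
    refine le_trans (hε j) ?_
    calc (T ^ (N₀ + 1)) j j ≤ ∑ l, (T ^ (N₀ + 1)) j l :=
          Finset.single_le_sum (fun l _ => pow_entry_nonneg hS.1 _ j l) (Finset.mem_univ j)
      _ = 1 := pow_row_sum T hS _ j
  have hkac := kac T hS j N₀ ε hε hεpos hε1
  have hq := treeWeight_pos T hS hIrr j
  rw [hA, eq_div_iff (ne_of_gt hq)]
  linarith [hkac]


/-- The mean return time to `j` is `m_{jj} = σ_{n-1}/q_j`, where
`σ_{n-1} = Σ_k q_k` is the total weight of all spanning converging trees. -/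
theorem mean_return_time {n : ℕ} (T : Matrix (Fin n) (Fin n) ℝ)
    (hS : IsStochastic T) (hIrr : IsIrreducible T) (hErg : IsErgodic T) :
    ∀ j, sigmaW T (n - 1) = ∑ k, treeWeight T k ∧
      mfpt T j j = sigmaW T (n - 1) / treeWeight T j :=
  mean_return_time' T hS hIrr hErg

end MFPT
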